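/- Let W be an m-dimensional subspace of a finite-dimensional k-vector space U = ⊕_{v∈V} U_v, let d : V → ℤ, and for λ ∈ k× let x(λ) ∈ (k×)^V act on U by scaling the component U_v by λ^{−d_v}. Let π be the ordered partition of V induced by the level sets of d (ordered by increasing d-value). Then the limit as λ → 0 of the subspaces x(λ)·W in the Grassmannian Grass(m, U) exists and equals W(π) = ⊕_{n=1}^r proj_{π_n}(W ∩ ⊕_{v: d_v ≤ d_n} U_v), where d_1 < ⋯ < d_r are the distinct values of d. -/

import Mathlib

attribute [local instance] Classical.propDecidable

noncomputable def projE {V : Type*} (m : V → ℕ) (I : Set V) :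
    ((v : V) → Fin (m v) → ℝ) →ₗ[ℝ] ((v : V) → Fin (m v) → ℝ) :=
  LinearMap.pi fun v => if v ∈ I then LinearMap.proj v else 0

noncomputable def xact {V : Type*} (m : V → ℕ) (d : V → ℤ) (t : ℝ) :
    ((v : V) → Fin (m v) → ℝ) →ₗ[ℝ] ((v : V) → Fin (m v) → ℝ) :=
  LinearMap.pi fun v => t ^ (-(d v)) • LinearMap.proj v

open Filter Set Submodule Topology NNReal

section basics
variable {V : Type*} [Fintype V] {m : V → ℕ}

lemma projE_apply (I : Set V) (u : (v : V) → Fin (m v) → ℝ) (v : V) :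
    projE m I u v = if v ∈ I then u v else 0 := by
  simp only [projE, LinearMap.pi_apply]
  split_ifs <;> rfl

lemma mem_ker_projE {I : Set V} {u : (v : V) → Fin (m v) → ℝ} :
    u ∈ LinearMap.ker (projE m I) ↔ ∀ v ∈ I, u v = 0 := by
  rw [LinearMap.mem_ker]
  constructor
  · intro h v hv
    have := congrFun h v
    rwa [projE_apply, if_pos hv] at this
  · intro h
    funext v
    rw [projE_apply]
    split_ifs with hv
    · exact h v hv
    · rfl

lemma xact_apply (d : V → ℤ) (t : ℝ) (u : (v : V) → Fin (m v) → ℝ) (v : V) :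
    xact m d t u v = t ^ (-(d v)) • u v := by
  simp only [xact, LinearMap.pi_apply, LinearMap.smul_apply]
  rfl

lemma tendsto_scaled (d : V → ℤ) (c : ℤ) (w : (v : V) → Fin (m v) → ℝ)
    (hw : ∀ v, c < d v → w v = 0) :
    Tendsto (fun t : ℝ => t ^ c • xact m d t w) (nhdsWithin 0 {(0 : ℝ)}ᶜ)
      (nhds (projE m {v | d v = c} w)) := by
  rw [tendsto_pi_nhds]
  intro v
  have hcoord : ∀ t : ℝ, (t ^ c • xact m d t w) v = (t ^ c * t ^ (-(d v))) • w v := by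
    intro t; rw [Pi.smul_apply, xact_apply, smul_smul]
  rcases lt_trichotomy (d v) c with h | h | h
  · -- d v < c : positive exponent, tends to 0
    have htarget : projE m {v | d v = c} w v = 0 := by
      rw [projE_apply, if_neg (by simp [h.ne])]
    rw [htarget]
    have hev : (fun t : ℝ => t ^ (c - d v).toNat • w v) =ᶠ[nhdsWithin 0 {(0 : ℝ)}ᶜ]
        fun t => (t ^ c • xact m d t w) v := by
      filter_upwards [self_mem_nhdsWithin] with t ht
      have ht' : t ≠ 0 := ht
      rw [hcoord, ← zpow_add₀ ht', ← zpow_natCast t (c - d v).toNat,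
        Int.toNat_of_nonneg (by omega : (0:ℤ) ≤ c - d v), sub_eq_add_neg]
    refine Tendsto.congr' hev ?_
    have : Tendsto (fun t : ℝ => t ^ (c - d v).toNat • w v) (nhds 0)
        (nhds ((0 : ℝ) ^ (c - d v).toNat • w v)) :=
      ((continuous_pow _).tendsto 0).smul_const _
    rw [zero_pow (by omega), zero_smul] at this
    exact this.mono_left nhdsWithin_le_nhds
  · -- d v = c
    have htarget : projE m {v | d v = c} w v = w v := by
      rw [projE_apply, if_pos (by simp [h])]
    rw [htarget]
    have hev : (fun _ : ℝ => w v) =ᶠ[nhdsWithin 0 {(0 : ℝ)}ᶜ]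
        fun t => (t ^ c • xact m d t w) v := by
      filter_upwards [self_mem_nhdsWithin] with t ht
      have ht' : (t : ℝ) ≠ 0 := ht
      rw [hcoord, ← zpow_add₀ ht', h, add_neg_cancel, zpow_zero, one_smul]
    exact Tendsto.congr' hev tendsto_const_nhds
  · -- c < d v : component of w is 0
    have hw0 : w v = 0 := hw v h
    have htarget : projE m {v | d v = c} w v = 0 := by
      rw [projE_apply, if_neg (by simp [h.ne'])]
    rw [htarget]
    have hev : (fun _ : ℝ => (0 : Fin (m v) → ℝ)) =ᶠ[nhdsWithin 0 {(0 : ℝ)}ᶜ]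
        fun t => (t ^ c • xact m d t w) v := by
      refine Eventually.of_forall fun t => ?_
      show (0 : Fin (m v) → ℝ) = (t ^ c • xact m d t w) v
      rw [hcoord, hw0, smul_zero]
    exact Tendsto.congr' hev tendsto_const_nhds

end basics

lemma exists_compl_inside {M : Type*} [AddCommGroup M] [Module ℝ M] {A B : Submodule ℝ M}
    (h : A ≤ B) : ∃ C : Submodule ℝ M, C ≤ B ∧ A ⊓ C = ⊥ ∧ A ⊔ C = B := by
  obtain ⟨C', hC'⟩ := Submodule.exists_isCompl (A.comap B.subtype)
  have hmapA : (A.comap B.subtype).map B.subtype = A := by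
    rw [Submodule.map_comap_subtype, inf_eq_right.2 h]
  refine ⟨C'.map B.subtype, Submodule.map_subtype_le _ _, ?_, ?_⟩
  · rw [← hmapA, ← Submodule.map_inf _ (Submodule.injective_subtype B),
      disjoint_iff.1 hC'.disjoint, Submodule.map_bot]
  · rw [← hmapA, ← Submodule.map_sup, codisjoint_iff.1 hC'.codisjoint,
      Submodule.map_top, Submodule.range_subtype]

lemma exists_adapted {V : Type*} [Fintype V] (m : V → ℕ) (d : V → ℤ)
    (W : Submodule ℝ ((v : V) → Fin (m v) → ℝ)) (n₀ : ℤ) (h₀ : ∀ v, n₀ < d v) :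
    ∀ n : ℤ, n₀ ≤ n →
    ∃ (ι : Type) (_ : Fintype ι) (b : ι → ((v : V) → Fin (m v) → ℝ)) (cc : ι → ℤ),
      (∀ i, b i ∈ W ⊓ LinearMap.ker (projE m ({v | d v ≤ cc i}ᶜ))) ∧
      (∀ i, cc i ≤ n) ∧
      (W ⊓ LinearMap.ker (projE m ({v | d v ≤ n}ᶜ)) ≤ span ℝ (Set.range b)) ∧
      LinearIndependent ℝ (fun i => projE m {v | d v = cc i} (b i)) := by
  refine Int.le_induction ?_ ?_
  · -- base case n = n₀ : the subspace is ⊥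
    refine ⟨Empty, inferInstance, Empty.elim, Empty.elim, fun i => i.elim, fun i => i.elim,
      ?_, linearIndependent_empty_type⟩
    intro u hu
    have hu0 : u = 0 := by
      funext v
      refine mem_ker_projE.1 hu.2 v ?_
      simp only [Set.mem_compl_iff, Set.mem_setOf_eq, not_le]
      exact h₀ v
    rw [hu0]
    exact zero_mem _
  · -- inductive step
    rintro n hn ⟨ι, hι, b, cc, hb, hcc, hspan, hli⟩
    set A : Submodule ℝ ((v : V) → Fin (m v) → ℝ) :=
      W ⊓ LinearMap.ker (projE m ({v | d v ≤ n}ᶜ)) with hA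
    set B : Submodule ℝ ((v : V) → Fin (m v) → ℝ) :=
      W ⊓ LinearMap.ker (projE m ({v | d v ≤ n + 1}ᶜ)) with hB
    have hAB : A ≤ B := by
      refine inf_le_inf_left W ?_
      intro u hu
      rw [mem_ker_projE] at hu ⊢
      intro v hv
      exact hu v (by simp only [Set.mem_compl_iff, Set.mem_setOf_eq, not_le] at hv ⊢; omega)
    obtain ⟨C, hCB, hinf, hsup⟩ := exists_compl_inside hAB
    set k' := Module.finrank ℝ ↥C with hk'
    set bas := Module.finBasis ℝ ↥C with hbas
    refine ⟨ι ⊕ Fin k', inferInstance, Sum.elim b (fun j => ((bas j : _))),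
      Sum.elim cc (fun _ => n + 1), ?_, ?_, ?_, ?_⟩
    · rintro (i | j)
      · exact hb i
      · exact hCB (bas j).2
    · rintro (i | j)
      · exact (hcc i).trans (by omega)
      · exact le_refl _
    · -- span condition
      rw [Sum.elim_range, span_union, ← hsup]
      refine sup_le_sup hspan ?_
      · have : span ℝ (Set.range fun j => ((bas j : ((v : V) → Fin (m v) → ℝ)))) = C := by
          have h1 : span ℝ (Set.range bas) = (⊤ : Submodule ℝ ↥C) := bas.span_eq
          have h2 := congrArg (Submodule.map C.subtype) h1
          rwa [Submodule.map_span, ← Set.range_comp, Submodule.map_top,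
            Submodule.range_subtype] at h2
        exact le_of_eq this.symm
    · -- linear independence
      have heq : (fun i : ι ⊕ Fin k' =>
          projE m {v | d v = Sum.elim cc (fun _ => n + 1) i}
            (Sum.elim b (fun j => ((bas j : _))) i)) =
          Sum.elim (fun i => projE m {v | d v = cc i} (b i))
            (fun j => projE m {v | d v = n + 1} ((bas j : _))) := by
        funext i
        rcases i with i | j <;> rfl
      rw [heq]
      have hnew : LinearIndependent ℝ
          (fun j => projE m {v | d v = n + 1} ((bas j : ((v : V) → Fin (m v) → ℝ)))) := by
        have hker : LinearMap.ker ((projE m {v | d v = n + 1}).comp C.subtype) = ⊥ := by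
          rw [LinearMap.ker_eq_bot']
          intro z hz
          have hzB : (z : ((v : V) → Fin (m v) → ℝ)) ∈ B := hCB z.2
          have hzA : (z : ((v : V) → Fin (m v) → ℝ)) ∈ A := by
            refine ⟨hzB.1, mem_ker_projE.2 fun v hv => ?_⟩
            simp only [Set.mem_compl_iff, Set.mem_setOf_eq, not_le] at hv
            rcases eq_or_lt_of_le (by omega : n + 1 ≤ d v) with h | h
            · have := congrFun (show (projE m {v | d v = n + 1}).comp C.subtype z = 0 from hz) v
              rwa [LinearMap.comp_apply, projE_apply, if_pos (by exact h.symm)] at this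
            · exact mem_ker_projE.1 hzB.2 v
                (by simp only [Set.mem_compl_iff, Set.mem_setOf_eq, not_le]; omega)
          have : (z : ((v : V) → Fin (m v) → ℝ)) ∈ A ⊓ C := ⟨hzA, z.2⟩
          rw [hinf] at this
          exact Subtype.ext this
        have := bas.linearIndependent.map' ((projE m {v | d v = n + 1}).comp C.subtype) hker
        exact this
      refine hli.sum_type hnew ?_
      -- disjointness of the spans
      have hS1 : span ℝ (Set.range fun i => projE m {v | d v = cc i} (b i)) ≤
          LinearMap.ker (projE m ({v | d v ≤ n}ᶜ)) := by
        rw [span_le]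
        rintro _ ⟨i, rfl⟩
        refine SetLike.mem_coe.2 (mem_ker_projE.2 fun v hv => ?_)
        simp only [Set.mem_compl_iff, Set.mem_setOf_eq, not_le] at hv
        show projE m {v | d v = cc i} (b i) v = 0
        rw [projE_apply, if_neg]
        simp only [Set.mem_setOf_eq]
        have := hcc i
        omega
      have hS2 : span ℝ (Set.range fun j =>
          projE m {v | d v = n + 1} ((bas j : ((v : V) → Fin (m v) → ℝ)))) ≤
          LinearMap.ker (projE m ({v | d v = n + 1}ᶜ)) := by
        rw [span_le]
        rintro _ ⟨j, rfl⟩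
        refine SetLike.mem_coe.2 (mem_ker_projE.2 fun v hv => ?_)
        simp only [Set.mem_compl_iff, Set.mem_setOf_eq] at hv
        show projE m {v | d v = n + 1} (bas j : ((v : V) → Fin (m v) → ℝ)) v = 0
        rw [projE_apply, if_neg (by simpa using hv)]
      have hker_disj : Disjoint (LinearMap.ker (projE m ({v | d v ≤ n}ᶜ)))
          (LinearMap.ker (projE m ({v | d v = n + 1}ᶜ))) := by
        refine disjoint_iff.2 (eq_bot_iff.2 ?_)
        intro z hz
        obtain ⟨hz1, hz2⟩ := Submodule.mem_inf.1 hz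
        have hz0 : z = 0 := by
          funext v
          by_cases hv : d v ≤ n
          · exact mem_ker_projE.1 hz2 v
              (by simp only [Set.mem_compl_iff, Set.mem_setOf_eq]; omega)
          · exact mem_ker_projE.1 hz1 v (by simpa using hv)
        rw [hz0]
        exact zero_mem _
      exact hker_disj.mono hS1 hS2

lemma limit_mem_span {ι : Type*} [Fintype ι] {E : Type*} [NormedAddCommGroup E]
    [NormedSpace ℝ E] [FiniteDimensional ℝ E] {l : Filter ℝ} [l.NeBot]
    (ℓ : ι → E) (hℓ : LinearIndependent ℝ ℓ)
    (r : ℝ → ι → E) (hr : ∀ i, Tendsto (fun t => r t i) l (𝓝 0))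
    (y : ℝ → E) (u : E) (hy : ∀ᶠ t in l, y t ∈ span ℝ (range fun i => ℓ i + r t i))
    (hu : Tendsto y l (𝓝 u)) : u ∈ span ℝ (range ℓ) := by
  classical
  set T : (ι → ℝ) →ₗ[ℝ] E := Fintype.linearCombination ℝ ℓ with hT
  have hTapp : ∀ a : ι → ℝ, T a = ∑ i, a i • ℓ i := fun a => by
    simp [hT, Fintype.linearCombination_apply]
  have hTinj : Function.Injective T := by
    rw [← LinearMap.ker_eq_bot, LinearMap.ker_eq_bot']
    intro a ha
    funext i
    exact Fintype.linearIndependent_iff.1 hℓ a (by rw [← hTapp]; exact ha) i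
  set e : (ι → ℝ) ≃ₗ[ℝ] LinearMap.range T := LinearEquiv.ofInjective T hTinj with he
  set ee := e.toContinuousLinearEquiv with hee
  set K : ℝ≥0 := ‖(ee.symm : (LinearMap.range T) →L[ℝ] (ι → ℝ))‖₊ with hKdef
  have hK : ∀ a : ι → ℝ, ‖a‖ ≤ K * ‖T a‖ := by
    intro a
    have h1 : ‖a‖ ≤ K * ‖ee a‖ := ee.antilipschitz.le_mul_norm (map_zero ee) a
    have h2 : ((ee a : E)) = T a := rfl
    calc ‖a‖ ≤ K * ‖ee a‖ := h1
      _ = K * ‖T a‖ := by rw [show ‖ee a‖ = ‖((ee a : E))‖ from rfl, h2]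
  set Kr : ℝ := (K : ℝ) + 1 with hKr
  have hKrpos : 0 < Kr := by positivity
  have hKK : ∀ a : ι → ℝ, ‖a‖ ≤ Kr * ‖T a‖ := fun a =>
    (hK a).trans (mul_le_mul_of_nonneg_right (by simp [hKr]) (norm_nonneg _))
  set α : ℝ → ι → ℝ := fun t =>
    if h : y t ∈ span ℝ (range fun i => ℓ i + r t i) then
      (mem_span_range_iff_exists_fun ℝ).1 h |>.choose else 0 with hαdef
  have hα : ∀ᶠ t in l, ∑ i, α t i • (ℓ i + r t i) = y t := by
    filter_upwards [hy] with t h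
    simp only [hαdef, dif_pos h]
    exact ((mem_span_range_iff_exists_fun ℝ).1 h).choose_spec
  set s : ℝ → ℝ := fun t => ∑ i, ‖r t i‖ with hsdef
  have hs : Tendsto s l (𝓝 0) := by
    have : Tendsto s l (𝓝 (∑ i : ι, (0:ℝ))) := by
      exact tendsto_finset_sum _ fun i _ => by simpa using (hr i).norm
    simpa using this
  have hsnn : ∀ t, 0 ≤ s t := fun t => Finset.sum_nonneg fun i _ => norm_nonneg _
  have hbound : ∀ t, ‖∑ i, α t i • r t i‖ ≤ ‖α t‖ * s t := by
    intro t
    calc ‖∑ i, α t i • r t i‖ ≤ ∑ i, ‖α t i • r t i‖ := norm_sum_le _ _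
      _ ≤ ∑ i, ‖α t‖ * ‖r t i‖ := Finset.sum_le_sum fun i _ => by
          rw [norm_smul]
          exact mul_le_mul_of_nonneg_right (norm_le_pi_norm (α t) i) (norm_nonneg _)
      _ = ‖α t‖ * s t := by rw [hsdef, Finset.mul_sum]
  have hTα : ∀ᶠ t in l, T (α t) = y t - ∑ i, α t i • r t i := by
    filter_upwards [hα] with t h
    rw [hTapp, eq_sub_iff_add_eq, ← Finset.sum_add_distrib, ← h]
    simp [smul_add]
  have hαbound : ∀ᶠ t in l, ‖α t‖ ≤ 2 * Kr * (‖u‖ + 1) := by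
    have h1 : ∀ᶠ t in l, s t < (2 * Kr)⁻¹ :=
      hs.eventually (gt_mem_nhds (by positivity))
    have h2 : ∀ᶠ t in l, ‖y t‖ < ‖u‖ + 1 :=
      hu.norm.eventually (gt_mem_nhds (by linarith [norm_nonneg u]))
    filter_upwards [h1, h2, hTα] with t h1 h2 h3
    have hb := hbound t
    have h4 : ‖T (α t)‖ ≤ ‖y t‖ + ‖α t‖ * s t := by
      rw [h3]; exact (norm_sub_le _ _).trans (by linarith)
    have h5 : ‖α t‖ ≤ Kr * (‖y t‖ + ‖α t‖ * s t) :=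
      (hKK (α t)).trans (mul_le_mul_of_nonneg_left h4 hKrpos.le)
    have h6 : Kr * s t ≤ 1/2 := by
      have hh : Kr * (2*Kr)⁻¹ = 1/2 := by field_simp
      calc Kr * s t ≤ Kr * (2*Kr)⁻¹ := mul_le_mul_of_nonneg_left h1.le hKrpos.le
        _ = 1/2 := hh
    nlinarith [mul_le_mul_of_nonneg_left h6 (norm_nonneg (α t)),
      mul_le_mul_of_nonneg_left h2.le hKrpos.le, hKrpos, norm_nonneg (α t),
      norm_nonneg (y t), hsnn t]
  have htend0 : Tendsto (fun t => ∑ i, α t i • r t i) l (𝓝 0) := by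
    apply squeeze_zero_norm' (a := fun t => 2 * Kr * (‖u‖ + 1) * s t)
    · filter_upwards [hαbound] with t h
      exact (hbound t).trans (mul_le_mul_of_nonneg_right h (hsnn t))
    · simpa using hs.const_mul (2 * Kr * (‖u‖ + 1))
  have hfinal : Tendsto (fun t => T (α t)) l (𝓝 u) := by
    have : Tendsto (fun t => y t - ∑ i, α t i • r t i) l (𝓝 u) := by
      simpa using hu.sub htend0
    exact this.congr' (hTα.mono fun t h => h.symm)
  have hclosed : IsClosed (span ℝ (range ℓ) : Set E) :=
    (span ℝ (range ℓ)).closed_of_finiteDimensional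
  exact hclosed.mem_of_tendsto hfinal (Eventually.of_forall fun t => by
    rw [hTapp]
    exact sum_mem fun i _ => smul_mem _ _ (subset_span (mem_range_self i)))


theorem stmt18 {V : Type*} [Fintype V] (m : V → ℕ) (d : V → ℤ)
    (W : Submodule ℝ ((v : V) → Fin (m v) → ℝ)) :
    ((⨆ c : ℤ,
        (W ⊓ LinearMap.ker (projE m ({v | d v ≤ c}ᶜ))).map (projE m {v | d v = c}) :
        Submodule ℝ ((v : V) → Fin (m v) → ℝ)) : Set ((v : V) → Fin (m v) → ℝ)) =
      {u | ∃ y : ℝ → ((v : V) → Fin (m v) → ℝ),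
        (∀ t : ℝ, t ≠ 0 → y t ∈ W.map (xact m d t)) ∧
          Filter.Tendsto y (nhdsWithin 0 {(0 : ℝ)}ᶜ) (nhds u)} := by
  apply Set.Subset.antisymm
  · -- W(π) is contained in the set of limits
    intro u hu
    rw [SetLike.mem_coe] at hu
    refine Submodule.iSup_induction
      (motive := fun u => ∃ y : ℝ → ((v : V) → Fin (m v) → ℝ),
        (∀ t : ℝ, t ≠ 0 → y t ∈ W.map (xact m d t)) ∧
          Filter.Tendsto y (nhdsWithin 0 {(0 : ℝ)}ᶜ) (nhds u)) _ hu ?_ ?_ ?_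
    · rintro c u ⟨w, hw, rfl⟩
      refine ⟨fun t => t ^ c • xact m d t w, fun t ht => ?_, ?_⟩
      · exact ⟨t ^ c • w, W.smul_mem _ hw.1, map_smul (xact m d t) _ w⟩
      · refine tendsto_scaled d c w fun v hv => ?_
        refine mem_ker_projE.1 hw.2 v ?_
        simp only [Set.mem_compl_iff, Set.mem_setOf_eq, not_le]
        exact hv
    · exact ⟨fun _ => 0, fun t ht => zero_mem _, tendsto_const_nhds⟩
    · rintro x y' ⟨y1, h1, h1'⟩ ⟨y2, h2, h2'⟩
      exact ⟨y1 + y2, fun t ht => add_mem (h1 t ht) (h2 t ht), h1'.add h2'⟩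
  · -- every limit lies in W(π)
    rintro u ⟨y, hyW, hyu⟩
    obtain ⟨n₁, hn₁⟩ := Finite.exists_le d
    obtain ⟨M, hM⟩ := Finite.exists_le (fun v => -(d v))
    set n₀ : ℤ := min (-M - 1) n₁ with hn₀
    have h₀ : ∀ v, n₀ < d v := fun v => by
      have h1 := hM v
      have : n₀ ≤ -M - 1 := min_le_left _ _
      omega
    obtain ⟨ι, hι, b, cc, hb, hcc, hspan, hli⟩ :=
      exists_adapted m d W n₀ h₀ n₁ (min_le_right _ _)
    have hW : W ≤ span ℝ (Set.range b) := by
      intro w hw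
      refine hspan ⟨hw, mem_ker_projE.2 fun v hv => ?_⟩
      simp only [Set.mem_compl_iff, Set.mem_setOf_eq, not_le] at hv
      exact absurd (hn₁ v) (by omega)
    set ℓ : ι → ((v : V) → Fin (m v) → ℝ) := fun i => projE m {v | d v = cc i} (b i) with hℓ
    set r : ℝ → ι → ((v : V) → Fin (m v) → ℝ) :=
      fun t i => t ^ (cc i) • xact m d t (b i) - ℓ i with hr
    have hrt : ∀ i, Filter.Tendsto (fun t => r t i) (nhdsWithin 0 {(0 : ℝ)}ᶜ) (nhds 0) := by
      intro i
      have h1 : ∀ v, cc i < d v → b i v = 0 := by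
        intro v hv
        refine mem_ker_projE.1 (hb i).2 v ?_
        simp only [Set.mem_compl_iff, Set.mem_setOf_eq, not_le]
        exact hv
      have h2 := (tendsto_scaled d (cc i) (b i) h1).sub_const (ℓ i)
      simpa [hr, hℓ] using h2
    have hy' : ∀ᶠ t in nhdsWithin 0 {(0 : ℝ)}ᶜ,
        y t ∈ span ℝ (Set.range fun i => ℓ i + r t i) := by
      filter_upwards [self_mem_nhdsWithin] with t ht
      have ht' : t ≠ 0 := ht
      obtain ⟨w, hwW, hwy⟩ := hyW t ht'
      have h2 : y t ∈ Submodule.map (xact m d t) (span ℝ (Set.range b)) :=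
        ⟨w, hW hwW, hwy⟩
      rw [Submodule.map_span, ← Set.range_comp] at h2
      have h3 : span ℝ (Set.range (⇑(xact m d t) ∘ b)) ≤
          span ℝ (Set.range fun i => ℓ i + r t i) := by
        rw [span_le]
        rintro _ ⟨i, rfl⟩
        have hx : (⇑(xact m d t) ∘ b) i = t ^ (-(cc i)) • (ℓ i + r t i) := by
          show xact m d t (b i) = _
          have h4 : ℓ i + r t i = t ^ (cc i) • xact m d t (b i) := by
            show ℓ i + (t ^ (cc i) • xact m d t (b i) - ℓ i) = _
            rw [add_comm]
            exact sub_add_cancel _ _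
          rw [h4, smul_smul, ← zpow_add₀ ht', neg_add_cancel, zpow_zero, one_smul]
        rw [hx]
        exact SetLike.mem_coe.2 (smul_mem _ _ (subset_span (Set.mem_range_self i)))
      exact h3 h2
    have hu' : u ∈ span ℝ (Set.range ℓ) := limit_mem_span ℓ hli r hrt y u hy' hyu
    have hfin : span ℝ (Set.range ℓ) ≤
        ⨆ c : ℤ, (W ⊓ LinearMap.ker (projE m ({v | d v ≤ c}ᶜ))).map (projE m {v | d v = c}) := by
      rw [span_le]
      rintro _ ⟨i, rfl⟩
      exact SetLike.mem_coe.2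
        (Submodule.mem_iSup_of_mem (cc i) (Submodule.mem_map_of_mem (hb i)))
    exact hfin hu'
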